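/- arXiv:1306.4821 — 2 statements merged into one kernel-verified Lean document; each statement's English description precedes it below -/
import Mathlib

section
/- Let (W,S) be a finite Coxeter system. Then every W-digraph is acyclic. Moreover, for a W-digraph Γ with finitely many vertices, the number of sources of Γ equals the number of connected components of Γ, and the number of sinks of Γ equals the number of connected components of Γ. -/
open Finsupp

set_option synthInstance.maxHeartbeats 1000000
set_option maxHeartbeats 1000000

noncomputable section

/-- The field `ℚ(u)` of rational functions. -/
abbrev Kq : Type := RatFunc ℚ

/-- The indeterminate `u`. -/
def uu : Kq := RatFunc.X

namespace WDaux
open Polynomial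

noncomputable def am : Polynomial ℚ →+* Kq := algebraMap (Polynomial ℚ) Kq

lemma am_inj : Function.Injective am := RatFunc.algebraMap_injective ℚ

lemma uu_am : uu = am Polynomial.X := (RatFunc.algebraMap_X).symm

lemma am_ne_zero {p : Polynomial ℚ} (h : p ≠ 0) : am p ≠ 0 := by
  intro h0
  exact h (am_inj (by simpa using h0))

lemma am_ne_zero_of_eval {p : Polynomial ℚ} {c : ℚ} (h : p.eval c ≠ 0) : am p ≠ 0 :=
  am_ne_zero (fun hp => h (by simp [hp]))

/-- `x` is (the image of) a polynomial whose value at `c` is `q`. -/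
def Ev (c : ℚ) (x : Kq) (q : ℚ) : Prop := ∃ p : Polynomial ℚ, x = am p ∧ p.eval c = q

lemma Ev.add {c x y q r} (hx : Ev c x q) (hy : Ev c y r) : Ev c (x + y) (q + r) := by
  obtain ⟨p, rfl, hp⟩ := hx; obtain ⟨p', rfl, hp'⟩ := hy
  exact ⟨p + p', by simp, by simp [hp, hp']⟩

lemma Ev.mul {c x y q r} (hx : Ev c x q) (hy : Ev c y r) : Ev c (x * y) (q * r) := by
  obtain ⟨p, rfl, hp⟩ := hx; obtain ⟨p', rfl, hp'⟩ := hy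
  exact ⟨p * p', by simp, by simp [hp, hp']⟩

lemma Ev_zero (c : ℚ) : Ev c 0 0 := ⟨0, by simp, by simp⟩
lemma Ev_one (c : ℚ) : Ev c 1 1 := ⟨1, by simp, by simp⟩
lemma Ev_uu (c : ℚ) : Ev c uu c := ⟨Polynomial.X, uu_am, by simp⟩

lemma Ev_unique {c x q r} (hq : Ev c x q) (hr : Ev c x r) : q = r := by
  obtain ⟨p, rfl, hp⟩ := hq; obtain ⟨p', he, hp'⟩ := hr
  cases am_inj he; exact hp.symm.trans hp'
  
lemma Ev.sub {c x y q r} (hx : Ev c x q) (hy : Ev c y r) : Ev c (x - y) (q - r) := by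
  obtain ⟨p, rfl, hp⟩ := hx; obtain ⟨p', rfl, hp'⟩ := hy
  exact ⟨p - p', by simp, by simp [hp, hp']⟩

lemma Ev_uu_sq (c : ℚ) : Ev c (uu ^ 2) (c ^ 2) :=
  ⟨Polynomial.X ^ 2, by rw [uu_am, map_pow], by simp⟩

lemma Ev_sum {ι : Type*} (s : Finset ι) (f : ι → Kq) (q : ι → ℚ) (c : ℚ)
    (h : ∀ w ∈ s, Ev c (f w) (q w)) : Ev c (∑ w ∈ s, f w) (∑ w ∈ s, q w) := by
  classical
  induction s using Finset.induction_on with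
  | empty => simpa using Ev_zero c
  | insert a s' hni ih =>
      rw [Finset.sum_insert hni, Finset.sum_insert hni]
      exact (h _ (Finset.mem_insert_self a s')).add
        (ih fun w hw => h w (Finset.mem_insert_of_mem hw))

end WDaux


/-- An `S`-labeled digraph on vertex type `V` with labels in `B`:
`Edge a b s d` means there is an edge from `a` to `b` labeled `s`, which is
dashed if `d = true` and solid if `d = false`.  There are no loops, and every
vertex occurs in exactly one edge with any given label. -/
structure SLabeledDigraph (V B : Type*) where
  Edge : V → V → B → Bool → Prop
  no_loop : ∀ v s d, ¬ Edge v v s d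
  unique_edge : ∀ v s, ∃! e : V × V × Bool,
    (e.1 = v ∨ e.2.1 = v) ∧ Edge e.1 e.2.1 s e.2.2

namespace SLabeledDigraph

variable {V B : Type*} (Γ : SLabeledDigraph V B)

/-- Swap the endpoints of an edge datum. -/
def eswap {V : Type*} (e : V × V × Bool) : V × V × Bool := (e.2.1, e.1, e.2.2)

/-- The reversed digraph `Γ_rev`, with all edge directions reversed but types
and labels kept. -/
def rev : SLabeledDigraph V B where
  Edge a b s d := Γ.Edge b a s d
  no_loop v s d := Γ.no_loop v s d
  unique_edge v s := by
    obtain ⟨e, ⟨hinc, hedge⟩, huniq⟩ := Γ.unique_edge v s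
    refine ⟨eswap e, ⟨Or.symm hinc, hedge⟩, ?_⟩
    rintro e' ⟨hinc', hedge'⟩
    have h1 : eswap e' = e := huniq (eswap e') ⟨Or.symm hinc', hedge'⟩
    calc e' = eswap (eswap e') := rfl
    _ = eswap e := by rw [h1]

/-- The restriction `Γ_J`: same vertices, only edges with labels in `J`. -/
def restrict (J : Set B) : SLabeledDigraph V J where
  Edge a b s d := Γ.Edge a b s.1 d
  no_loop v s d := Γ.no_loop v s.1 d
  unique_edge v s := Γ.unique_edge v s.1

/-- Directed adjacency (ignoring labels and edge types). -/
def DAdj (a b : V) : Prop := ∃ s d, Γ.Edge a b s d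

/-- Undirected adjacency. -/
def UAdj (a b : V) : Prop := Γ.DAdj a b ∨ Γ.DAdj b a

/-- `Γ` is connected if any two vertices are joined by an undirected path. -/
def Connected : Prop := ∀ a b : V, Relation.ReflTransGen Γ.UAdj a b

/-- A source is a vertex at which no edge ends. -/
def IsSource (a : V) : Prop := ∀ b s d, ¬ Γ.Edge b a s d

/-- A sink is a vertex at which no edge begins. -/
def IsSink (a : V) : Prop := ∀ b s d, ¬ Γ.Edge a b s d

/-- `Γ` is acyclic if it has no nonempty directed circuit. -/
def Acyclic : Prop := ∀ a : V, ¬ Relation.TransGen Γ.DAdj a a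

/-- The setoid whose classes are the connected components of `Γ`. -/
def compSetoid : Setoid V :=
  ⟨Relation.ReflTransGen Γ.UAdj,
    ⟨fun _ => Relation.ReflTransGen.refl,
     fun h => (@Relation.ReflTransGen.stdSymm _ _ ⟨fun _ _ hab => Or.symm hab⟩).symm _ _ h,
     fun h1 h2 => Relation.ReflTransGen.trans h1 h2⟩⟩

end SLabeledDigraph

/-- The Hecke algebra of a Coxeter system over `ℚ(u)`: an associative
`ℚ(u)`-algebra `H` with basis `{T_w : w ∈ W}` such that `T_1 = 1` and
`T_s T_w = T_{sw}` if `ℓ(sw) > ℓ(w)`, while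
`T_s T_w = u² T_{sw} + (u² - 1) T_w` if `ℓ(sw) < ℓ(w)`. -/
structure HeckeAlgebra {B W : Type*} [Group W] {M : CoxeterMatrix B}
    (cs : CoxeterSystem M W) (H : Type*) [Ring H] [Algebra Kq H] where
  T : W → H
  basis : Module.Basis W Kq H
  basis_eq : ∀ w, basis w = T w
  T_one : T 1 = 1
  T_mul_of_lt : ∀ (i : B) (w : W), cs.length w < cs.length (cs.simple i * w) →
    T (cs.simple i) * T w = T (cs.simple i * w)
  T_mul_of_gt : ∀ (i : B) (w : W), cs.length (cs.simple i * w) < cs.length w →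
    T (cs.simple i) * T w = (uu ^ 2) • T (cs.simple i * w) + (uu ^ 2 - 1) • T w

variable {B W : Type*} [Group W] {M : CoxeterMatrix B}
variable {H : Type*} [Ring H] [Algebra Kq H]

/-- `ρ` is the representation of `H` on `M(Γ)` (the `ℚ(u)`-vector space with
basis the vertices of `Γ`) in which each `T_s` acts by the operator `τ_s`
determined by the edges of `Γ`. -/
def WDigraphRep {V : Type*} (cs : CoxeterSystem M W) (ha : HeckeAlgebra cs H)
    (Γ : SLabeledDigraph V B)
    (ρ : H →ₐ[Kq] Module.End Kq (V →₀ Kq)) : Prop :=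
  ∀ (a b : V) (i : B),
    (Γ.Edge a b i false →
      ρ (ha.T (cs.simple i)) (single a (1 : Kq)) = single b (1 : Kq) ∧
      ρ (ha.T (cs.simple i)) (single b (1 : Kq))
        = (uu ^ 2 - 1) • single b (1 : Kq) + (uu ^ 2) • single a (1 : Kq)) ∧
    (Γ.Edge a b i true →
      ρ (ha.T (cs.simple i)) (single a (1 : Kq)) = uu • single a (1 : Kq) + (uu + 1) • single b (1 : Kq) ∧
      ρ (ha.T (cs.simple i)) (single b (1 : Kq))
        = (uu ^ 2 - uu - 1) • single b (1 : Kq) + (uu ^ 2 - uu) • single a (1 : Kq))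

namespace WDaux
section Hecke
open CoxeterSystem Polynomial

variable {B W : Type*} [Group W] {M : CoxeterMatrix B}
variable {H : Type*} [Ring H] [Algebra Kq H]
variable (cs : CoxeterSystem M W) (ha : HeckeAlgebra cs H)

lemma T_simple_sq (i : B) :
    ha.T (cs.simple i) * ha.T (cs.simple i) = (uu ^ 2) • (1 : H) + (uu ^ 2 - 1) • ha.T (cs.simple i) := by
  have h := ha.T_mul_of_gt i (cs.simple i) (by
    rw [cs.simple_mul_simple_self i, cs.length_one, cs.length_simple i]; omega)
  rw [cs.simple_mul_simple_self i, ha.T_one] at h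
  exact h

/-- Decompose `T w` as `T s * T w'` along a left descent. -/
lemma T_descent {w : W} (hw : w ≠ 1) :
    ∃ (i : B) (w' : W), w = cs.simple i * w' ∧ cs.length w = cs.length w' + 1 ∧
      ha.T w = ha.T (cs.simple i) * ha.T w' := by
  obtain ⟨i, hi⟩ := cs.exists_leftDescent_of_ne_one hw
  have hlen : cs.length (cs.simple i * w) + 1 = cs.length w := cs.isLeftDescent_iff.1 hi
  refine ⟨i, cs.simple i * w, (cs.simple_mul_simple_cancel_left i).symm, by omega, ?_⟩
  have h := ha.T_mul_of_lt i (cs.simple i * w) (by rw [cs.simple_mul_simple_cancel_left i]; omega)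
  rw [cs.simple_mul_simple_cancel_left i] at h
  exact h.symm

/-- Right multiplication rule, increasing case. -/
lemma T_mul_simple_of_lt (i : B) :
    ∀ (n : ℕ) (w : W), cs.length w = n → cs.length (w * cs.simple i) = cs.length w + 1 →
      ha.T w * ha.T (cs.simple i) = ha.T (w * cs.simple i) := by
  intro n
  induction n using Nat.strong_induction_on with
  | _ n ih =>
    intro w hn hup
    rcases eq_or_ne w 1 with rfl | hne
    · rw [ha.T_one, one_mul, one_mul]
    · obtain ⟨j, w', hw, hlen, hT⟩ := T_descent cs ha hne
      have h1 : cs.length (w' * cs.simple i) = cs.length w' + 1 := by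
        rcases cs.length_mul_simple w' i with h | h
        · exact h
        · exfalso
          have h2 : cs.simple j * (w' * cs.simple i) = w * cs.simple i := by
            rw [hw, mul_assoc]
          have h3 := cs.length_simple_mul (w' * cs.simple i) j
          rw [h2] at h3
          omega
      have hIH : ha.T w' * ha.T (cs.simple i) = ha.T (w' * cs.simple i) :=
        ih (cs.length w') (by omega) w' rfl h1
      have hfin : ha.T (cs.simple j) * ha.T (w' * cs.simple i) = ha.T (w * cs.simple i) := by
        have h4 := ha.T_mul_of_lt j (w' * cs.simple i) (by
          rw [← mul_assoc, ← hw]; omega)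
        rw [← mul_assoc, ← hw] at h4
        exact h4
      rw [hT, mul_assoc, hIH, hfin]

/-- Right multiplication rule, decreasing case. -/
lemma T_mul_simple_of_gt (i : B) (w : W) (hdn : cs.length (w * cs.simple i) + 1 = cs.length w) :
    ha.T w * ha.T (cs.simple i)
      = (uu ^ 2) • ha.T (w * cs.simple i) + (uu ^ 2 - 1) • ha.T w := by
  set v := w * cs.simple i with hv
  have hvw : v * cs.simple i = w := by rw [hv, cs.simple_mul_simple_cancel_right i]
  have hA : ha.T v * ha.T (cs.simple i) = ha.T w := by
    rw [← hvw]
    exact T_mul_simple_of_lt cs ha i (cs.length v) v rfl (by rw [hvw]; omega)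
  calc ha.T w * ha.T (cs.simple i) = ha.T v * (ha.T (cs.simple i) * ha.T (cs.simple i)) := by
        rw [← mul_assoc, hA]
    _ = (uu ^ 2) • ha.T v + (uu ^ 2 - 1) • ha.T w := by
        rw [T_simple_sq cs ha i, mul_add, mul_smul_comm, mul_smul_comm, mul_one, hA]

section FintypeW
variable [Fintype W]

/-- The sum of all `T w`. -/
def EE : H := ∑ w : W, ha.T w

/-- Coefficients of the twisted alternating element. -/
def aN (N : ℕ) (w : W) : Kq := (-1 : Kq) ^ (cs.length w) * uu ^ (2 * (N - cs.length w))

/-- The twisted alternating element. -/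
def EE' (N : ℕ) : H := ∑ w : W, aN cs N w • ha.T w

lemma sum_anti (σ : Equiv.Perm W) (h : W → H) (hh : ∀ w, h (σ w) = - h w) :
    ∑ w : W, h w = 0 := by
  have h1 : ∑ w : W, h (σ w) = ∑ w : W, h w := Fintype.sum_equiv σ _ _ (fun w => rfl)
  have h2 : ∑ w : W, h (σ w) = - ∑ w : W, h w := by
    rw [← Finset.sum_neg_distrib]
    exact Finset.sum_congr rfl (fun w _ => hh w)
  have h3 : ∑ w : W, h w + ∑ w : W, h w = 0 := by
    nth_rewrite 1 [← h1]
    rw [h2]; abel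
  have h4 : (2 : Kq) • (∑ w : W, h w) = 0 := by
    rw [two_smul]; exact h3
  have h2ne : (2 : Kq) ≠ 0 := by
    have h2e : (2 : Kq) = am 2 := (map_ofNat am 2).symm
    rw [h2e]
    exact am_ne_zero_of_eval (c := 0) (by norm_num)
  exact (smul_eq_zero.mp h4).resolve_left h2ne

lemma Ts_mul_EE (i : B) : ha.T (cs.simple i) * EE cs ha = (uu ^ 2) • EE cs ha := by
  set f : W → H := fun w => ha.T (cs.simple i) * ha.T w - (uu ^ 2) • ha.T w with hf
  have key : ∀ w : W, cs.length (cs.simple i * w) = cs.length w + 1 →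
      f (cs.simple i * w) = - f w := by
    intro w hw
    have h1 : ha.T (cs.simple i) * ha.T w = ha.T (cs.simple i * w) :=
      ha.T_mul_of_lt i w (by omega)
    have h2 := ha.T_mul_of_gt i (cs.simple i * w) (by
      rw [cs.simple_mul_simple_cancel_left i]; omega)
    rw [cs.simple_mul_simple_cancel_left i] at h2
    simp only [hf, h1, h2, sub_smul, one_smul]
    abel
  have anti : ∀ w : W, f (cs.simple i * w) = - f w := by
    intro w
    rcases cs.length_simple_mul w i with h | h
    · exact key w h
    · have h' := key (cs.simple i * w) (by rw [cs.simple_mul_simple_cancel_left i]; omega)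
      rw [cs.simple_mul_simple_cancel_left i] at h'
      rw [h', neg_neg]
  have hz : ∑ w : W, f w = 0 := sum_anti (Equiv.mulLeft (cs.simple i)) f (fun w => anti w)
  have hexp : ∑ w : W, f w
      = ha.T (cs.simple i) * EE cs ha - (uu ^ 2) • EE cs ha := by
    rw [hf, Finset.sum_sub_distrib, ← Finset.mul_sum, ← Finset.smul_sum]
    rfl
  rw [hexp] at hz
  exact sub_eq_zero.mp hz

lemma EE_mul_Ts (i : B) : EE cs ha * ha.T (cs.simple i) = (uu ^ 2) • EE cs ha := by
  set f : W → H := fun w => ha.T w * ha.T (cs.simple i) - (uu ^ 2) • ha.T w with hf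
  have key : ∀ w : W, cs.length (w * cs.simple i) = cs.length w + 1 →
      f (w * cs.simple i) = - f w := by
    intro w hw
    have h1 : ha.T w * ha.T (cs.simple i) = ha.T (w * cs.simple i) :=
      T_mul_simple_of_lt cs ha i (cs.length w) w rfl hw
    have h2 := T_mul_simple_of_gt cs ha i (w * cs.simple i) (by
      rw [cs.simple_mul_simple_cancel_right i]; omega)
    rw [cs.simple_mul_simple_cancel_right i] at h2
    simp only [hf, h1, h2, sub_smul, one_smul]
    abel
  have anti : ∀ w : W, f (w * cs.simple i) = - f w := by
    intro w
    rcases cs.length_mul_simple w i with h | h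
    · exact key w h
    · have h' := key (w * cs.simple i) (by rw [cs.simple_mul_simple_cancel_right i]; omega)
      rw [cs.simple_mul_simple_cancel_right i] at h'
      rw [h', neg_neg]
  have hz : ∑ w : W, f w = 0 := sum_anti (Equiv.mulRight (cs.simple i)) f (fun w => anti w)
  have hexp : ∑ w : W, f w
      = EE cs ha * ha.T (cs.simple i) - (uu ^ 2) • EE cs ha := by
    rw [hf, Finset.sum_sub_distrib, ← Finset.sum_mul, ← Finset.smul_sum]
    rfl
  rw [hexp] at hz
  exact sub_eq_zero.mp hz

lemma aN_step {N : ℕ} {w w' : W} (h1 : cs.length w' = cs.length w + 1) (h2 : cs.length w' ≤ N) :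
    aN cs N w' * uu ^ 2 = - aN cs N w := by
  unfold aN
  rw [h1]
  have h3 : 2 * (N - (cs.length w + 1)) + 2 = 2 * (N - cs.length w) := by omega
  rw [mul_assoc, ← pow_add uu, h3, pow_succ]
  ring

lemma Ts_mul_EE' (i : B) (N : ℕ) (hN : ∀ w : W, cs.length w ≤ N) :
    ha.T (cs.simple i) * EE' cs ha N = (-1 : Kq) • EE' cs ha N := by
  set f : W → H := fun w => aN cs N w • (ha.T (cs.simple i) * ha.T w) + aN cs N w • ha.T w
    with hf
  have key : ∀ w : W, cs.length (cs.simple i * w) = cs.length w + 1 →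
      f (cs.simple i * w) = - f w := by
    intro w hw
    have h1 : ha.T (cs.simple i) * ha.T w = ha.T (cs.simple i * w) :=
      ha.T_mul_of_lt i w (by omega)
    have h2 := ha.T_mul_of_gt i (cs.simple i * w) (by
      rw [cs.simple_mul_simple_cancel_left i]; omega)
    rw [cs.simple_mul_simple_cancel_left i] at h2
    have h3 : aN cs N (cs.simple i * w) * uu ^ 2 = - aN cs N w :=
      aN_step cs hw (hN _)
    simp only [hf, h1, h2]
    rw [smul_add, smul_smul, h3, smul_smul, mul_sub, h3, mul_one]
    simp only [sub_smul, neg_smul]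
    abel
  have anti : ∀ w : W, f (cs.simple i * w) = - f w := by
    intro w
    rcases cs.length_simple_mul w i with h | h
    · exact key w h
    · have h' := key (cs.simple i * w) (by rw [cs.simple_mul_simple_cancel_left i]; omega)
      rw [cs.simple_mul_simple_cancel_left i] at h'
      rw [h', neg_neg]
  have hz : ∑ w : W, f w = 0 := sum_anti (Equiv.mulLeft (cs.simple i)) f (fun w => anti w)
  have hexp : ∑ w : W, f w
      = ha.T (cs.simple i) * EE' cs ha N + EE' cs ha N := by
    rw [hf, Finset.sum_add_distrib]
    unfold EE'
    rw [Finset.mul_sum]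
    congr 1
    exact Finset.sum_congr rfl (fun w _ => (mul_smul_comm _ _ _).symm)
  rw [hexp] at hz
  rw [neg_one_smul]
  exact eq_neg_of_add_eq_zero_left hz

end FintypeW
end Hecke
end WDaux

/-- `Γ` is a `W`-digraph: the assignment `T_s ↦ τ_s` extends to a
representation of `H` on `M(Γ)`. -/
def IsWDigraph {V : Type*} (cs : CoxeterSystem M W) (ha : HeckeAlgebra cs H)
    (Γ : SLabeledDigraph V B) : Prop :=
  ∃ ρ : H →ₐ[Kq] Module.End Kq (V →₀ Kq), WDigraphRep cs ha Γ ρ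



namespace WDaux
section Rep
open Polynomial

lemma uu_add_one_ne : (uu + 1 : Kq) ≠ 0 := by
  have h : (uu + 1 : Kq) = am (X + 1) := by rw [uu_am, map_add, map_one]
  rw [h]; exact am_ne_zero_of_eval (c := 1) (by norm_num)

lemma uu_sq_ne : (uu ^ 2 : Kq) ≠ 0 := by
  have h : (uu ^ 2 : Kq) = am (X ^ 2) := by rw [uu_am, map_pow]
  rw [h]; exact am_ne_zero_of_eval (c := 1) (by norm_num)

lemma uu_sq_sub_ne : (uu ^ 2 - uu : Kq) ≠ 0 := by
  have h : (uu ^ 2 - uu : Kq) = am (X ^ 2 - X) := by rw [uu_am, map_sub, map_pow]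
  rw [h]; exact am_ne_zero_of_eval (c := 2) (by norm_num)

variable {B W : Type*} [Group W] {M : CoxeterMatrix B}
variable {H : Type*} [Ring H] [Algebra Kq H]
variable {V : Type*} {cs : CoxeterSystem M W} {ha : HeckeAlgebra cs H}
variable {Γ : SLabeledDigraph V B} {ρ : H →ₐ[Kq] Module.End Kq (V →₀ Kq)}

lemma ts_single_apply_off (hρ : WDigraphRep cs ha Γ ρ) {i : B} {a b : V} {d : Bool}
    (hE : Γ.Edge a b i d) {ξ : V} (hξ : ξ = a ∨ ξ = b) {η : V} (hηa : η ≠ a) (hηb : η ≠ b) :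
    (ρ (ha.T (cs.simple i)) (single η (1 : Kq))) ξ = 0 := by
  obtain ⟨⟨a', b', d'⟩, ⟨hinc, hE'⟩, _⟩ := Γ.unique_edge η i
  have hkey : ¬ (ξ = a' ∨ ξ = b') := by
    intro hmem
    obtain ⟨e0, _, hu0⟩ := Γ.unique_edge ξ i
    have e1 : ((a, b, d) : V × V × Bool) = e0 := by
      refine hu0 _ ⟨?_, hE⟩
      rcases hξ with h | h
      · exact Or.inl h.symm
      · exact Or.inr h.symm
    have e2 : ((a', b', d') : V × V × Bool) = e0 := by
      refine hu0 _ ⟨?_, hE'⟩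
      rcases hmem with h | h
      · exact Or.inl h.symm
      · exact Or.inr h.symm
    have e3 : ((a, b, d) : V × V × Bool) = (a', b', d') := by rw [e1, ← e2]
    obtain ⟨ha1, hb1, _⟩ : a = a' ∧ b = b' ∧ d = d' := by
      simpa [Prod.ext_iff] using e3
    rcases hinc with h | h
    · exact hηa (by rw [← h, ha1])
    · exact hηb (by rw [← h, hb1])
  push_neg at hkey
  obtain ⟨hka, hkb⟩ := hkey
  rcases hinc with hinc | hinc
  · subst hinc
    cases d'
    · rw [((hρ _ _ i).1 hE').1]
      exact Finsupp.single_eq_of_ne' (Ne.symm hkb)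
    · rw [((hρ _ _ i).2 hE').1]
      simp [Finsupp.single_eq_of_ne' (Ne.symm hka), Finsupp.single_eq_of_ne' (Ne.symm hkb)]
  · subst hinc
    cases d'
    · rw [((hρ _ _ i).1 hE').2]
      simp [Finsupp.single_eq_of_ne' (Ne.symm hka), Finsupp.single_eq_of_ne' (Ne.symm hkb)]
    · rw [((hρ _ _ i).2 hE').2]
      simp [Finsupp.single_eq_of_ne' (Ne.symm hka), Finsupp.single_eq_of_ne' (Ne.symm hkb)]

lemma coeff_master (hρ : WDigraphRep cs ha Γ ρ) {i : B} {a b : V} {d : Bool}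
    (hE : Γ.Edge a b i d) {ξ : V} (hξ : ξ = a ∨ ξ = b) (c1 c2 : Kq)
    (hka : (ρ (ha.T (cs.simple i)) (single a (1:Kq))) ξ
      = c1 * (single a (1:Kq)) a + c2 * (single a (1:Kq)) b)
    (hkb : (ρ (ha.T (cs.simple i)) (single b (1:Kq))) ξ
      = c1 * (single b (1:Kq)) a + c2 * (single b (1:Kq)) b)
    (x : V →₀ Kq) :
    (ρ (ha.T (cs.simple i)) x) ξ = c1 * x a + c2 * x b := by
  induction x using Finsupp.induction_linear with
  | zero => simp
  | add f g hf hg =>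
      rw [map_add, Finsupp.add_apply, hf, hg, Finsupp.add_apply, Finsupp.add_apply]; ring
  | single η c =>
      have h1 : single η c = c • single η (1:Kq) := by rw [Finsupp.smul_single', mul_one]
      have key : (ρ (ha.T (cs.simple i)) (single η (1:Kq))) ξ
          = c1 * (single η (1:Kq)) a + c2 * (single η (1:Kq)) b := by
        by_cases hηa : η = a
        · subst hηa; exact hka
        · by_cases hηb : η = b
          · subst hηb; exact hkb
          · rw [ts_single_apply_off hρ hE hξ hηa hηb,
                Finsupp.single_eq_of_ne' hηa, Finsupp.single_eq_of_ne' hηb]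
            ring
      rw [h1, map_smul, Finsupp.smul_apply, key, Finsupp.smul_apply, Finsupp.smul_apply,
        smul_eq_mul, smul_eq_mul, smul_eq_mul]
      ring

lemma edge_ne (hE : Γ.Edge a b i d) : a ≠ b := fun h => Γ.no_loop b i d (h ▸ hE)

lemma coeff_end_solid (hρ : WDigraphRep cs ha Γ ρ) {i : B} {a b : V}
    (hE : Γ.Edge a b i false) (x : V →₀ Kq) :
    (ρ (ha.T (cs.simple i)) x) b = x a + (uu ^ 2 - 1) * x b := by
  have hab : a ≠ b := edge_ne hE
  have h := coeff_master hρ hE (Or.inr rfl) 1 (uu ^ 2 - 1) ?_ ?_ x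
  · rw [h]; ring
  · rw [((hρ _ _ i).1 hE).1]
    simp [Finsupp.single_eq_of_ne hab, Finsupp.single_eq_of_ne (Ne.symm hab)]
  · rw [((hρ _ _ i).1 hE).2]
    simp [Finsupp.single_eq_of_ne hab, Finsupp.single_eq_of_ne (Ne.symm hab)]

lemma coeff_end_dashed (hρ : WDigraphRep cs ha Γ ρ) {i : B} {a b : V}
    (hE : Γ.Edge a b i true) (x : V →₀ Kq) :
    (ρ (ha.T (cs.simple i)) x) b = (uu + 1) * x a + (uu ^ 2 - uu - 1) * x b := by
  have hab : a ≠ b := edge_ne hE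
  exact coeff_master hρ hE (Or.inr rfl) (uu + 1) (uu ^ 2 - uu - 1)
    (by rw [((hρ _ _ i).2 hE).1]
        simp [Finsupp.single_eq_of_ne hab, Finsupp.single_eq_of_ne (Ne.symm hab)])
    (by rw [((hρ _ _ i).2 hE).2]
        simp [Finsupp.single_eq_of_ne hab, Finsupp.single_eq_of_ne (Ne.symm hab)]) x

lemma coeff_start_solid (hρ : WDigraphRep cs ha Γ ρ) {i : B} {a b : V}
    (hE : Γ.Edge a b i false) (x : V →₀ Kq) :
    (ρ (ha.T (cs.simple i)) x) a = (uu ^ 2) * x b := by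
  have hab : a ≠ b := edge_ne hE
  have h := coeff_master hρ hE (Or.inl rfl) 0 (uu ^ 2) ?_ ?_ x
  · rw [h]; ring
  · rw [((hρ _ _ i).1 hE).1]
    simp [Finsupp.single_eq_of_ne hab, Finsupp.single_eq_of_ne (Ne.symm hab)]
  · rw [((hρ _ _ i).1 hE).2]
    simp [Finsupp.single_eq_of_ne hab, Finsupp.single_eq_of_ne (Ne.symm hab)]

lemma coeff_start_dashed (hρ : WDigraphRep cs ha Γ ρ) {i : B} {a b : V}
    (hE : Γ.Edge a b i true) (x : V →₀ Kq) :
    (ρ (ha.T (cs.simple i)) x) a = uu * x a + (uu ^ 2 - uu) * x b := by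
  have hab : a ≠ b := edge_ne hE
  exact coeff_master hρ hE (Or.inl rfl) uu (uu ^ 2 - uu)
    (by rw [((hρ _ _ i).2 hE).1]
        simp [Finsupp.single_eq_of_ne hab, Finsupp.single_eq_of_ne (Ne.symm hab)])
    (by rw [((hρ _ _ i).2 hE).2]
        simp [Finsupp.single_eq_of_ne hab, Finsupp.single_eq_of_ne (Ne.symm hab)]) x

/-- Induction over `T w` acting on a fixed vector. -/
lemma rep_invariant (P : ℕ → (V →₀ Kq) → Prop)
    (hstep : ∀ (i : B) (n : ℕ) (x : V →₀ Kq), P n x → P (n + 1) (ρ (ha.T (cs.simple i)) x))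
    (x0 : V →₀ Kq) (h0 : P 0 x0) (w : W) : P (cs.length w) (ρ (ha.T w) x0) := by
  suffices h : ∀ (n : ℕ) (w : W), cs.length w = n → P n (ρ (ha.T w) x0) from h _ w rfl
  intro n
  induction n using Nat.strong_induction_on with
  | _ n ih =>
    intro w hn
    rcases eq_or_ne w 1 with rfl | hne
    · rw [cs.length_one] at hn
      subst hn
      rw [ha.T_one, map_one]
      simpa using h0
    · obtain ⟨i, w', hw, hlen, hT⟩ := T_descent cs ha hne
      subst hw
      have hn' : n = cs.length w' + 1 := by omega
      subst hn'
      rw [hT, map_mul, Module.End.mul_apply]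
      exact hstep i (cs.length w') _ (ih (cs.length w') (by omega) w' rfl)

lemma eigen_const_edge (hρ : WDigraphRep cs ha Γ ρ) {v : V →₀ Kq}
    (hv : ∀ i : B, ρ (ha.T (cs.simple i)) v = (uu ^ 2) • v)
    {γ δ : V} {i : B} {d : Bool} (hE : Γ.Edge γ δ i d) : v γ = v δ := by
  cases d
  · have h1 := coeff_end_solid hρ hE v
    rw [hv i, Finsupp.smul_apply, smul_eq_mul] at h1
    linear_combination -h1
  · have h1 := coeff_end_dashed hρ hE v
    rw [hv i, Finsupp.smul_apply, smul_eq_mul] at h1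
    have h2 : (uu + 1) * (v γ - v δ) = 0 := by linear_combination -h1
    rcases mul_eq_zero.mp h2 with h3 | h3
    · exact absurd h3 uu_add_one_ne
    · exact sub_eq_zero.mp h3

lemma eigen_const (hρ : WDigraphRep cs ha Γ ρ) {v : V →₀ Kq}
    (hv : ∀ i : B, ρ (ha.T (cs.simple i)) v = (uu ^ 2) • v)
    {β β' : V} (h : Relation.ReflTransGen Γ.UAdj β β') : v β = v β' := by
  induction h with
  | refl => rfl
  | tail hab hbc ih =>
      rename_i b c _
      rcases hbc with ⟨i, d, hE⟩ | ⟨i, d, hE⟩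
      · exact ih.trans (eigen_const_edge hρ hv hE)
      · exact ih.trans (eigen_const_edge hρ hv hE).symm

lemma eigen_neg_edge (hρ : WDigraphRep cs ha Γ ρ) {v : V →₀ Kq}
    (hv : ∀ i : B, ρ (ha.T (cs.simple i)) v = (-1 : Kq) • v)
    {γ δ : V} {i : B} {d : Bool} (hE : Γ.Edge γ δ i d) : (v γ = 0 ↔ v δ = 0) := by
  cases d
  · have h1 := coeff_end_solid hρ hE v
    rw [hv i, Finsupp.smul_apply, smul_eq_mul] at h1
    have h2 : v γ = -(uu ^ 2) * v δ := by linear_combination -h1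
    constructor
    · intro h0
      rw [h0] at h2
      rcases mul_eq_zero.mp h2.symm with h3 | h3
      · exact absurd (neg_eq_zero.mp h3) uu_sq_ne
      · exact h3
    · intro h0; rw [h2, h0, mul_zero]
  · have h1 := coeff_end_dashed hρ hE v
    rw [hv i, Finsupp.smul_apply, smul_eq_mul] at h1
    have h2 : (uu + 1) * v γ = -(uu ^ 2 - uu) * v δ := by linear_combination -h1
    constructor
    · intro h0
      rw [h0, mul_zero] at h2
      rcases mul_eq_zero.mp h2.symm with h3 | h3
      · exact absurd (neg_eq_zero.mp h3) uu_sq_sub_ne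
      · exact h3
    · intro h0
      rw [h0, mul_zero] at h2
      rcases mul_eq_zero.mp h2 with h3 | h3
      · exact absurd h3 uu_add_one_ne
      · exact h3

lemma eigen_neg_zero (hρ : WDigraphRep cs ha Γ ρ) {v : V →₀ Kq}
    (hv : ∀ i : B, ρ (ha.T (cs.simple i)) v = (-1 : Kq) • v)
    {β β' : V} (h : Relation.ReflTransGen Γ.UAdj β β') (h0 : v β = 0) : v β' = 0 := by
  induction h with
  | refl => exact h0
  | tail hab hbc ih =>
      rcases hbc with ⟨i, d, hE⟩ | ⟨i, d, hE⟩
      · exact (eigen_neg_edge hρ hv hE).mp ih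
      · exact (eigen_neg_edge hρ hv hE).mpr ih

end Rep
end WDaux


namespace WDaux
section Inv
open Polynomial

variable {B W : Type*} [Group W] {M : CoxeterMatrix B}
variable {H : Type*} [Ring H] [Algebra Kq H]
variable {V : Type*} {cs : CoxeterSystem M W} {ha : HeckeAlgebra cs H}
variable {Γ : SLabeledDigraph V B} {ρ : H →ₐ[Kq] Module.End Kq (V →₀ Kq)}

/-- Every coordinate is a polynomial, nonnegative at `u = 2`. -/
def NNv (x : V →₀ Kq) : Prop := ∀ γ : V, ∃ q : ℚ, 0 ≤ q ∧ Ev 2 (x γ) q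

/-- Every coordinate is a polynomial. -/
def PolyV (x : V →₀ Kq) : Prop := ∀ γ : V, ∃ q : ℚ, Ev 0 (x γ) q

/-- Get the unique `s`-edge at a vertex `γ`, in endpoint-cases form. -/
lemma edge_at (Γ : SLabeledDigraph V B) (γ : V) (i : B) :
    (∃ b d, Γ.Edge γ b i d) ∨ (∃ a d, Γ.Edge a γ i d) := by
  obtain ⟨⟨a, b, d⟩, ⟨hinc, hE⟩, _⟩ := Γ.unique_edge γ i
  rcases hinc with h | h
  · exact Or.inl ⟨b, d, h ▸ hE⟩
  · exact Or.inr ⟨a, d, h ▸ hE⟩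

lemma NNv_step (hρ : WDigraphRep cs ha Γ ρ) (i : B) (x : V →₀ Kq) (h : NNv x) :
    NNv (ρ (ha.T (cs.simple i)) x) := by
  intro γ
  rcases edge_at Γ γ i with ⟨b, d, hE⟩ | ⟨a, d, hE⟩
  · obtain ⟨qa, hqa, hea⟩ := h γ
    obtain ⟨qb, hqb, heb⟩ := h b
    cases d
    · rw [coeff_start_solid hρ hE]
      exact ⟨2 ^ 2 * qb, by positivity, (Ev_uu_sq 2).mul heb⟩
    · rw [coeff_start_dashed hρ hE]
      exact ⟨2 * qa + (2 ^ 2 - 2) * qb, by positivity,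
        ((Ev_uu 2).mul hea).add (((Ev_uu_sq 2).sub (Ev_uu 2)).mul heb)⟩
  · obtain ⟨qa, hqa, hea⟩ := h a
    obtain ⟨qb, hqb, heb⟩ := h γ
    cases d
    · rw [coeff_end_solid hρ hE]
      exact ⟨qa + (2 ^ 2 - 1) * qb, by positivity,
        hea.add (((Ev_uu_sq 2).sub (Ev_one 2)).mul heb)⟩
    · rw [coeff_end_dashed hρ hE]
      refine ⟨(2 + 1) * qa + (2 ^ 2 - 2 - 1) * qb, by positivity,
        (((Ev_uu 2).add (Ev_one 2)).mul hea).add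
          ((((Ev_uu_sq 2).sub (Ev_uu 2)).sub (Ev_one 2)).mul heb)⟩

lemma PolyV_step (hρ : WDigraphRep cs ha Γ ρ) (i : B) (x : V →₀ Kq) (h : PolyV x) :
    PolyV (ρ (ha.T (cs.simple i)) x) := by
  intro γ
  rcases edge_at Γ γ i with ⟨b, d, hE⟩ | ⟨a, d, hE⟩
  · obtain ⟨qa, hea⟩ := h γ
    obtain ⟨qb, heb⟩ := h b
    cases d
    · rw [coeff_start_solid hρ hE]
      exact ⟨_, (Ev_uu_sq 0).mul heb⟩
    · rw [coeff_start_dashed hρ hE]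
      exact ⟨_, ((Ev_uu 0).mul hea).add (((Ev_uu_sq 0).sub (Ev_uu 0)).mul heb)⟩
  · obtain ⟨qa, hea⟩ := h a
    obtain ⟨qb, heb⟩ := h γ
    cases d
    · rw [coeff_end_solid hρ hE]
      exact ⟨_, hea.add (((Ev_uu_sq 0).sub (Ev_one 0)).mul heb)⟩
    · rw [coeff_end_dashed hρ hE]
      exact ⟨_, (((Ev_uu 0).add (Ev_one 0)).mul hea).add
        ((((Ev_uu_sq 0).sub (Ev_uu 0)).sub (Ev_one 0)).mul heb)⟩

lemma PolyV_single (γ0 : V) : PolyV (single γ0 (1 : Kq)) := by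
  intro γ
  by_cases hγ : γ0 = γ
  · subst hγ
    exact ⟨1, by simpa [Finsupp.single_eq_same] using Ev_one 0⟩
  · exact ⟨0, by rw [Finsupp.single_eq_of_ne' hγ]; exact Ev_zero 0⟩

lemma PolyV_TW (hρ : WDigraphRep cs ha Γ ρ) (γ0 : V) (w : W) :
    PolyV (ρ (ha.T w) (single γ0 (1 : Kq))) :=
  rep_invariant (P := fun _ x => PolyV x) (fun i _ x h => PolyV_step hρ i x h) _
    (PolyV_single γ0) w

/-- At a source, the coordinate of `τ_i x` is a polynomial that vanishes at `u = 0`. -/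
lemma source_coord_zero (hρ : WDigraphRep cs ha Γ ρ) {γs : V} (hsrc : Γ.IsSource γs)
    (x : V →₀ Kq) (hx : PolyV x) (i : B) :
    Ev 0 ((ρ (ha.T (cs.simple i)) x) γs) 0 := by
  rcases edge_at Γ γs i with ⟨b, d, hE⟩ | ⟨a, d, hE⟩
  · obtain ⟨qa, hea⟩ := hx γs
    obtain ⟨qb, heb⟩ := hx b
    cases d
    · rw [coeff_start_solid hρ hE]
      simpa using (Ev_uu_sq 0).mul heb
    · rw [coeff_start_dashed hρ hE]
      simpa using ((Ev_uu 0).mul hea).add (((Ev_uu_sq 0).sub (Ev_uu 0)).mul heb)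
  · exact absurd hE (hsrc a i d)

/-- The sink invariant: all mass at `u = 0` stays at the sink, with sign `(-1)^n`. -/
lemma sink_invariant (hρ : WDigraphRep cs ha Γ ρ) {t : V} (hsink : Γ.IsSink t) (w : W) :
    (∀ γ : V, γ ≠ t → Ev 0 ((ρ (ha.T w) (single t (1:Kq))) γ) 0) ∧
      Ev 0 ((ρ (ha.T w) (single t (1:Kq))) t) ((-1) ^ (cs.length w)) := by
  have hstep : ∀ (i : B) (n : ℕ) (x : V →₀ Kq),
      ((∀ γ : V, γ ≠ t → Ev 0 (x γ) 0) ∧ Ev 0 (x t) ((-1) ^ n)) →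
      ((∀ γ : V, γ ≠ t → Ev 0 ((ρ (ha.T (cs.simple i)) x) γ) 0) ∧
        Ev 0 ((ρ (ha.T (cs.simple i)) x) t) ((-1) ^ (n + 1))) := by
    rintro i n x ⟨hoff, hdiag⟩
    have hex : ∀ β : V, ∃ q : ℚ, Ev 0 (x β) q := by
      intro β
      by_cases hβ : β = t
      · subst hβ; exact ⟨_, hdiag⟩
      · exact ⟨0, hoff β hβ⟩
    constructor
    · intro γ hγ
      rcases edge_at Γ γ i with ⟨b, d, hE⟩ | ⟨a, d, hE⟩
      · obtain ⟨qa, hea⟩ := hex γ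
        obtain ⟨qb, heb⟩ := hex b
        cases d
        · rw [coeff_start_solid hρ hE]
          simpa using (Ev_uu_sq 0).mul heb
        · rw [coeff_start_dashed hρ hE]
          simpa using ((Ev_uu 0).mul hea).add (((Ev_uu_sq 0).sub (Ev_uu 0)).mul heb)
      · have hat : a ≠ t := fun h => hsink γ i d (h ▸ hE)
        have hea := hoff a hat
        have heg := hoff γ hγ
        cases d
        · rw [coeff_end_solid hρ hE]
          simpa using hea.add (((Ev_uu_sq 0).sub (Ev_one 0)).mul heg)
        · rw [coeff_end_dashed hρ hE]
          simpa using (((Ev_uu 0).add (Ev_one 0)).mul hea).add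
            ((((Ev_uu_sq 0).sub (Ev_uu 0)).sub (Ev_one 0)).mul heg)
    · rcases edge_at Γ t i with ⟨b, d, hE⟩ | ⟨a, d, hE⟩
      · exact absurd hE (hsink b i d)
      · have hat : a ≠ t := edge_ne hE
        have hea := hoff a hat
        cases d
        · rw [coeff_end_solid hρ hE]
          have := hea.add (((Ev_uu_sq 0).sub (Ev_one 0)).mul hdiag)
          convert this using 1
          ring
        · rw [coeff_end_dashed hρ hE]
          have := (((Ev_uu 0).add (Ev_one 0)).mul hea).add
            ((((Ev_uu_sq 0).sub (Ev_uu 0)).sub (Ev_one 0)).mul hdiag)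
          convert this using 1
          ring
  have hbase : (∀ γ : V, γ ≠ t → Ev 0 ((single t (1:Kq)) γ) 0) ∧
      Ev 0 ((single t (1:Kq)) t) ((-1:ℚ) ^ (0:ℕ)) := by
    constructor
    · intro γ hγ
      rw [Finsupp.single_eq_of_ne' (fun h => hγ h.symm)]
      exact Ev_zero 0
    · simpa [Finsupp.single_eq_same] using Ev_one 0
  exact rep_invariant
    (P := fun n x => (∀ γ : V, γ ≠ t → Ev 0 (x γ) 0) ∧ Ev 0 (x t) ((-1) ^ n))
    hstep (single t (1:Kq)) hbase w

section FW
variable [Fintype W]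

lemma EE_apply_coeff (x0 : V →₀ Kq) (β : V) :
    (ρ (EE cs ha) x0) β = ∑ w : W, (ρ (ha.T w) x0) β := by
  unfold EE
  rw [map_sum, LinearMap.sum_apply, Finsupp.finset_sum_apply]

lemma EE'_apply_coeff (N : ℕ) (x0 : V →₀ Kq) (β : V) :
    (ρ (EE' cs ha N) x0) β = ∑ w : W, aN cs N w * (ρ (ha.T w) x0) β := by
  unfold EE'
  rw [map_sum, LinearMap.sum_apply, Finsupp.finset_sum_apply]
  refine Finset.sum_congr rfl (fun w _ => ?_)
  rw [map_smul, LinearMap.smul_apply, Finsupp.smul_apply, smul_eq_mul]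

lemma EE_col_eigen (x0 : V →₀ Kq) (i : B) :
    ρ (ha.T (cs.simple i)) (ρ (EE cs ha) x0) = (uu ^ 2) • (ρ (EE cs ha) x0) := by
  rw [← Module.End.mul_apply, ← map_mul, Ts_mul_EE cs ha i, map_smul, LinearMap.smul_apply]

lemma EE'_col_eigen (N : ℕ) (hN : ∀ w : W, cs.length w ≤ N) (x0 : V →₀ Kq) (i : B) :
    ρ (ha.T (cs.simple i)) (ρ (EE' cs ha N) x0) = (-1 : Kq) • (ρ (EE' cs ha N) x0) := by
  rw [← Module.End.mul_apply, ← map_mul, Ts_mul_EE' cs ha i N hN, map_smul, LinearMap.smul_apply]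

lemma EE_row_eigen (x0 : V →₀ Kq) (i : B) :
    ρ (EE cs ha) (ρ (ha.T (cs.simple i)) x0) = (uu ^ 2) • (ρ (EE cs ha) x0) := by
  rw [← Module.End.mul_apply, ← map_mul, EE_mul_Ts cs ha i, map_smul, LinearMap.smul_apply]

/-- The diagonal entry of `ρ(E)` is nonzero. -/
lemma EE_diag_ne (hρ : WDigraphRep cs ha Γ ρ) (α : V) :
    (ρ (EE cs ha) (single α (1:Kq))) α ≠ 0 := by
  classical
  have hNN : ∀ w : W, ∃ q : ℚ, 0 ≤ q ∧ Ev 2 ((ρ (ha.T w) (single α (1:Kq))) α) q := by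
    intro w
    have h0 : NNv (single α (1:Kq)) := by
      intro γ
      by_cases hγ : α = γ
      · subst hγ
        exact ⟨1, by norm_num, by simpa [Finsupp.single_eq_same] using Ev_one 2⟩
      · exact ⟨0, le_refl 0, by rw [Finsupp.single_eq_of_ne' hγ]; exact Ev_zero 2⟩
    have hinv : NNv (ρ (ha.T w) (single α (1:Kq))) :=
      rep_invariant (P := fun _ x => NNv x) (fun i _ x h => NNv_step hρ i x h) _ h0 w
    exact hinv α
  choose q hq hEv using hNN
  rw [EE_apply_coeff]
  have hsum : Ev 2 (∑ w : W, (ρ (ha.T w) (single α (1:Kq))) α) (∑ w : W, q w) :=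
    Ev_sum _ _ _ _ (fun w _ => hEv w)
  obtain ⟨p, hp, hpe⟩ := hsum
  rw [hp]
  intro h0
  have hpz : p = 0 := am_inj (by simpa using h0)
  rw [hpz] at hpe
  simp at hpe
  -- now : ∑ q = 0, but the term at w = 1 is 1
  have h1 : q 1 = 1 := by
    have : Ev 2 ((ρ (ha.T (1:W)) (single α (1:Kq))) α) 1 := by
      rw [ha.T_one, map_one]
      simpa [Finsupp.single_eq_same] using Ev_one 2
    exact Ev_unique (hEv 1) this
  have hback : (0:ℚ) < ∑ w : W, q w := by
    have : (1:ℚ) ≤ ∑ w : W, q w := by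
      rw [← h1]
      exact Finset.single_le_sum (fun w _ => hq w) (Finset.mem_univ 1)
    linarith
  rw [← hpe] at hback
  exact lt_irrefl 0 hback

end FW
end Inv
end WDaux

/-- If `(W,S)` is finite then every `W`-digraph is acyclic;
moreover, for a `W`-digraph with finitely many vertices, the number of sources
and the number of sinks each equal the number of connected components. -/
theorem wdigraph_acyclic_card_sources_sinks {V : Type*} [Finite W]
    (cs : CoxeterSystem M W) (ha : HeckeAlgebra cs H)
    (Γ : SLabeledDigraph V B) (hwd : IsWDigraph cs ha Γ) :
    Γ.Acyclic ∧
    (Finite V →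
      Nat.card {a : V // Γ.IsSource a} = Nat.card (Quotient Γ.compSetoid) ∧
      Nat.card {a : V // Γ.IsSink a} = Nat.card (Quotient Γ.compSetoid)) := by
  classical
  obtain ⟨ρ, hρ⟩ := hwd
  letI : Fintype W := Fintype.ofFinite W
  open WDaux Polynomial in
  -- the row function relations
  have hrel_solid : ∀ (α : V) {γ δ : V} {i : B}, Γ.Edge γ δ i false →
      (ρ (EE cs ha) (single δ (1:Kq))) α = uu ^ 2 * (ρ (EE cs ha) (single γ (1:Kq))) α := by
    intro α γ δ i hE
    have h1 : ρ (ha.T (cs.simple i)) (single γ (1:Kq)) = single δ 1 := ((hρ γ δ i).1 hE).1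
    have h2 := EE_row_eigen (cs := cs) (ha := ha) (ρ := ρ) (single γ (1:Kq)) i
    rw [h1] at h2
    have h3 := congrArg (fun z : V →₀ Kq => z α) h2
    simpa [Finsupp.smul_apply, smul_eq_mul] using h3
  have hrel_dashed : ∀ (α : V) {γ δ : V} {i : B}, Γ.Edge γ δ i true →
      (uu + 1) * (ρ (EE cs ha) (single δ (1:Kq))) α
        = (uu ^ 2 - uu) * (ρ (EE cs ha) (single γ (1:Kq))) α := by
    intro α γ δ i hE
    have h1 : ρ (ha.T (cs.simple i)) (single γ (1:Kq))
        = uu • single γ (1:Kq) + (uu + 1) • single δ (1:Kq) := ((hρ γ δ i).2 hE).1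
    have h2 := EE_row_eigen (cs := cs) (ha := ha) (ρ := ρ) (single γ (1:Kq)) i
    rw [h1, map_add, map_smul, map_smul] at h2
    have h3 := congrArg (fun z : V →₀ Kq => z α) h2
    simp only [Finsupp.add_apply, Finsupp.smul_apply, smul_eq_mul] at h3
    linear_combination h3
  have acyc : Γ.Acyclic := by
    intro α hcyc
    have key : ∀ β : V, Relation.TransGen Γ.DAdj α β →
        ∃ a b : ℕ, 1 ≤ a + b ∧
          am ((X + 1) ^ b) * (ρ (EE cs ha) (single β (1:Kq))) α
            = am (X ^ (2 * a) * (X ^ 2 - X) ^ b) * (ρ (EE cs ha) (single α (1:Kq))) α := by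
      intro β h
      induction h with
      | single hstep =>
          obtain ⟨i, d, hE⟩ := hstep
          cases d
          · refine ⟨1, 0, by norm_num, ?_⟩
            have h1 := hrel_solid α hE
            simp only [pow_zero, map_one, one_mul, mul_one, map_mul, map_pow, map_sub,
              map_add, ← uu_am]
            simpa using h1
          · refine ⟨0, 1, by norm_num, ?_⟩
            have h1 := hrel_dashed α hE
            simp only [pow_one, pow_zero, one_mul, map_mul, map_pow, map_sub, map_add,
              map_one, ← uu_am]
            simpa using h1
      | tail hab hbc ih =>
          obtain ⟨a, b, hab1, heq⟩ := ih
          obtain ⟨i, d, hE⟩ := hbc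
          simp only [map_mul, map_pow, map_sub, map_add, map_one, ← uu_am] at heq
          cases d
          · refine ⟨a + 1, b, by omega, ?_⟩
            have h1 := hrel_solid α hE
            simp only [map_mul, map_pow, map_sub, map_add, map_one, ← uu_am]
            rw [h1]
            linear_combination (uu ^ 2) * heq
          · refine ⟨a, b + 1, by omega, ?_⟩
            have h1 := hrel_dashed α hE
            simp only [map_mul, map_pow, map_sub, map_add, map_one, ← uu_am]
            linear_combination ((uu + 1) ^ b) * h1 + (uu ^ 2 - uu) * heq
    obtain ⟨a, b, hab, heq⟩ := key α hcyc
    have hdiag : (ρ (EE cs ha) (single α (1:Kq))) α ≠ 0 := EE_diag_ne hρ α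
    have hpq : ((X + 1 : Polynomial ℚ)) ^ b = X ^ (2 * a) * (X ^ 2 - X) ^ b :=
      am_inj (mul_right_cancel₀ hdiag heq)
    rcases Nat.eq_zero_or_pos b with hb | hb
    · subst hb
      have ha1 : 1 ≤ a := by omega
      have h2 := congrArg (Polynomial.eval (2 : ℚ)) hpq
      simp only [pow_zero, Polynomial.eval_one, Polynomial.eval_mul, Polynomial.eval_pow,
        Polynomial.eval_X, mul_one] at h2
      have : (1 : ℚ) < 2 ^ (2 * a) := one_lt_pow₀ (by norm_num) (by omega)
      rw [← h2] at this
      exact lt_irrefl 1 this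
    · have h2 := congrArg (Polynomial.eval (1 : ℚ)) hpq
      simp only [Polynomial.eval_pow, Polynomial.eval_mul, Polynomial.eval_add,
        Polynomial.eval_sub, Polynomial.eval_one, Polynomial.eval_X, one_pow, one_mul] at h2
      norm_num [pow_eq_zero_iff (show b ≠ 0 by omega)] at h2
      rw [zero_pow (show b ≠ 0 by omega)] at h2
      exact pow_ne_zero b (by norm_num : (2:ℚ) ≠ 0) h2
  refine ⟨acyc, ?_⟩
  intro hfinV
  letI : Fintype V := Fintype.ofFinite V
  letI setV : Setoid V := Γ.compSetoid
  -- well-foundedness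
  haveI : IsTrans V (Relation.TransGen Γ.DAdj) := ⟨fun _ _ _ h1 h2 => h1.trans h2⟩
  haveI : IsIrrefl V (Relation.TransGen Γ.DAdj) := ⟨acyc⟩
  have hwf : WellFounded (Relation.TransGen Γ.DAdj) :=
    Finite.wellFounded_of_trans_of_irrefl _
  have hwfD : WellFounded Γ.DAdj :=
    Subrelation.wf (fun h => Relation.TransGen.single h) hwf
  haveI : IsTrans V (Relation.TransGen (Function.swap Γ.DAdj)) :=
    ⟨fun _ _ _ h1 h2 => h1.trans h2⟩
  haveI : IsIrrefl V (Relation.TransGen (Function.swap Γ.DAdj)) :=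
    ⟨fun a h => acyc a (Relation.transGen_swap.mp h)⟩
  have hwfF : WellFounded (Relation.TransGen (Function.swap Γ.DAdj)) :=
    Finite.wellFounded_of_trans_of_irrefl _
  have hwfDF : WellFounded (Function.swap Γ.DAdj) :=
    Subrelation.wf (fun h => Relation.TransGen.single h) hwfF
  -- existence of sources and sinks in every class
  have hsrc_ex : ∀ a : V, ∃ b : V, Γ.IsSource b ∧ Relation.ReflTransGen Γ.UAdj b a := by
    intro a
    obtain ⟨b, hbmem, hbmin⟩ := hwfD.has_min {b | Relation.ReflTransGen Γ.DAdj b a}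
      ⟨a, Relation.ReflTransGen.refl⟩
    refine ⟨b, ?_, Relation.ReflTransGen.mono (fun x y h => Or.inl h) _ _ hbmem⟩
    intro c i d hE
    exact hbmin c (Relation.ReflTransGen.head ⟨i, d, hE⟩ hbmem) ⟨i, d, hE⟩
  have hsink_ex : ∀ a : V, ∃ b : V, Γ.IsSink b ∧ Relation.ReflTransGen Γ.UAdj b a := by
    intro a
    obtain ⟨b, hbmem, hbmin⟩ := hwfDF.has_min
      {b | Relation.ReflTransGen (Function.swap Γ.DAdj) b a} ⟨a, Relation.ReflTransGen.refl⟩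
    refine ⟨b, ?_, Relation.ReflTransGen.mono (fun x y h => Or.inr h) _ _ hbmem⟩
    intro c i d hE
    exact hbmin c (Relation.ReflTransGen.head ⟨i, d, hE⟩ hbmem) ⟨i, d, hE⟩
  -- uniqueness of the source in a class
  have hsrc_uniq : ∀ γ0 γ1 : V, Γ.IsSource γ0 → Γ.IsSource γ1 →
      Relation.ReflTransGen Γ.UAdj γ0 γ1 → γ0 = γ1 := by
    intro γ0 γ1 h0 h1 hconn
    by_contra hne
    have heig : ∀ i : B, ρ (ha.T (cs.simple i)) (ρ (EE cs ha) (single γ0 (1:Kq)))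
        = (uu ^ 2) • (ρ (EE cs ha) (single γ0 (1:Kq))) := fun i => EE_col_eigen _ i
    have hconst : (ρ (EE cs ha) (single γ0 (1:Kq))) γ0
        = (ρ (EE cs ha) (single γ0 (1:Kq))) γ1 := eigen_const hρ heig hconn
    have hterm : ∀ (ξ : V), Γ.IsSource ξ → ∀ w : W, w ≠ 1 →
        Ev 0 ((ρ (ha.T w) (single γ0 (1:Kq))) ξ) 0 := by
      intro ξ hξ w hw
      obtain ⟨i, w', rfl, hlen, hT⟩ := T_descent cs ha hw
      rw [hT, map_mul, Module.End.mul_apply]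
      exact source_coord_zero hρ hξ _ (PolyV_TW hρ γ0 w') i
    have hev0 : Ev 0 ((ρ (EE cs ha) (single γ0 (1:Kq))) γ0) 1 := by
      rw [EE_apply_coeff]
      have hterms : ∀ w : W, Ev 0 ((ρ (ha.T w) (single γ0 (1:Kq))) γ0)
          (if w = 1 then 1 else 0) := by
        intro w
        by_cases hw : w = 1
        · subst hw
          rw [if_pos rfl, ha.T_one, map_one]
          simpa [Finsupp.single_eq_same] using Ev_one 0
        · rw [if_neg hw]
          exact hterm γ0 h0 w hw
      have hs := Ev_sum Finset.univ _ _ 0 (fun w _ => hterms w)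
      simpa using hs
    have hev1 : Ev 0 ((ρ (EE cs ha) (single γ0 (1:Kq))) γ1) 0 := by
      rw [EE_apply_coeff]
      have hterms : ∀ w : W, Ev 0 ((ρ (ha.T w) (single γ0 (1:Kq))) γ1) 0 := by
        intro w
        by_cases hw : w = 1
        · subst hw
          rw [ha.T_one, map_one]
          simpa [Finsupp.single_eq_of_ne' hne] using Ev_zero 0
        · exact hterm γ1 h1 w hw
      have hs := Ev_sum Finset.univ _ (fun _ => (0:ℚ)) 0 (fun w _ => hterms w)
      simpa using hs
    rw [hconst] at hev0
    have : (1 : ℚ) = 0 := Ev_unique hev0 hev1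
    norm_num at this
  -- uniqueness of the sink in a class
  set N : ℕ := Finset.univ.sup cs.length with hNdef
  have hN : ∀ w : W, cs.length w ≤ N := fun w => Finset.le_sup (Finset.mem_univ w)
  obtain ⟨w0, _, hw0⟩ := Finset.exists_mem_eq_sup Finset.univ ⟨1, Finset.mem_univ 1⟩ cs.length
  set m : ℕ := (Finset.univ.filter (fun w : W => cs.length w = N)).card with hmdef
  have hm : 1 ≤ m := by
    rw [hmdef]
    refine Finset.card_pos.mpr ⟨w0, ?_⟩
    rw [Finset.mem_filter]
    exact ⟨Finset.mem_univ w0, hw0.symm⟩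
  have hEvaN : ∀ w : W, Ev 0 (aN cs N w) (if cs.length w = N then ((-1:ℚ)) ^ N else 0) := by
    intro w
    refine ⟨(-1) ^ (cs.length w) * X ^ (2 * (N - cs.length w)), ?_, ?_⟩
    · rw [map_mul, map_pow, map_pow, map_neg, map_one, ← uu_am]
      rfl
    · rw [Polynomial.eval_mul, Polynomial.eval_pow, Polynomial.eval_pow,
        Polynomial.eval_neg, Polynomial.eval_one, Polynomial.eval_X]
      split_ifs with hw
      · rw [hw, Nat.sub_self, mul_zero, pow_zero, mul_one]
      · rw [zero_pow (by have := hN w; omega : 2 * (N - cs.length w) ≠ 0), mul_zero]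
  have hsinkcol : ∀ t β : V, Γ.IsSink t →
      Ev 0 ((ρ (EE' cs ha N) (single t (1:Kq))) β) (if β = t then (m:ℚ) else 0) := by
    intro t β ht
    rw [EE'_apply_coeff]
    by_cases hβ : β = t
    · subst hβ
      have hterms : ∀ w : W, Ev 0 (aN cs N w * (ρ (ha.T w) (single β (1:Kq))) β)
          (if cs.length w = N then 1 else 0) := by
        intro w
        have h1 := (hEvaN w).mul (sink_invariant hρ ht w).2
        by_cases hw : cs.length w = N
        · rw [if_pos hw]
          rw [if_pos hw] at h1
          have hval : ((-1:ℚ)) ^ N * (-1) ^ (cs.length w) = 1 := by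
            rw [hw, ← pow_add]
            exact Even.neg_one_pow ⟨N, by ring⟩
          rwa [hval] at h1
        · rw [if_neg hw]
          rw [if_neg hw, zero_mul] at h1
          exact h1
      have hs := Ev_sum Finset.univ _ _ 0 (fun w _ => hterms w)
      rw [if_pos rfl]
      have hcount : (∑ w : W, (if cs.length w = N then (1:ℚ) else 0)) = (m:ℚ) := by
        rw [hmdef, Finset.sum_boole]
      rwa [hcount] at hs
    · rw [if_neg hβ]
      have hterms : ∀ w : W, Ev 0 (aN cs N w * (ρ (ha.T w) (single t (1:Kq))) β) 0 := by
        intro w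
        have h1 := (hEvaN w).mul ((sink_invariant hρ ht w).1 β hβ)
        simpa using h1
      have hs := Ev_sum Finset.univ _ (fun _ => (0:ℚ)) 0 (fun w _ => hterms w)
      simpa using hs
  have hsink_uniq : ∀ t0 t1 : V, Γ.IsSink t0 → Γ.IsSink t1 →
      Relation.ReflTransGen Γ.UAdj t0 t1 → t0 = t1 := by
    intro t0 t1 h0 h1 hconn
    by_contra hne
    set x : V →₀ Kq := ρ (EE' cs ha N) (single t0 (1:Kq)) with hx
    set y : V →₀ Kq := ρ (EE' cs ha N) (single t1 (1:Kq)) with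
      hy
    set z : V →₀ Kq := x t0 • y - y t0 • x with hz
    have heigz : ∀ i : B, ρ (ha.T (cs.simple i)) z = (-1 : Kq) • z := by
      intro i
      rw [hz, map_sub, map_smul, map_smul, hx, hy,
        EE'_col_eigen N hN _ i, EE'_col_eigen N hN _ i]
      rw [smul_smul, smul_smul, smul_sub, smul_smul, smul_smul]
      ring_nf
    have hz0 : z t0 = 0 := by
      rw [hz, Finsupp.sub_apply, Finsupp.smul_apply, Finsupp.smul_apply,
        smul_eq_mul, smul_eq_mul]
      ring
    have hz1 : z t1 = 0 := eigen_neg_zero hρ heigz hconn hz0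
    rw [hz, Finsupp.sub_apply, Finsupp.smul_apply, Finsupp.smul_apply,
      smul_eq_mul, smul_eq_mul, sub_eq_zero] at hz1
    -- hz1 : x t0 * y t1 = y t0 * x t1
    have hx0 : Ev 0 (x t0) (m:ℚ) := by simpa using hsinkcol t0 t0 h0
    have hx1 : Ev 0 (x t1) 0 := by
      have := hsinkcol t0 t1 h0
      rwa [if_neg (fun h => hne h.symm)] at this
    have hy1 : Ev 0 (y t1) (m:ℚ) := by simpa using hsinkcol t1 t1 h1
    have hy0 : Ev 0 (y t0) 0 := by
      have := hsinkcol t1 t0 h1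
      rwa [if_neg hne] at this
    have hL : Ev 0 (x t0 * y t1) ((m:ℚ) * m) := hx0.mul hy1
    have hR : Ev 0 (y t0 * x t1) 0 := by simpa using hy0.mul hx1
    rw [hz1] at hL
    have hmm : (m:ℚ) * m = 0 := Ev_unique hL hR
    have : (m:ℚ) = 0 := by
      rcases mul_eq_zero.mp hmm with h | h <;> exact h
    rw [Nat.cast_eq_zero] at this
    omega
  -- assemble the two cardinalities
  have main : ∀ P : V → Prop,
      (∀ a : V, ∃ b : V, P b ∧ Relation.ReflTransGen Γ.UAdj b a) →
      (∀ b0 b1 : V, P b0 → P b1 → Relation.ReflTransGen Γ.UAdj b0 b1 → b0 = b1) →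
      Nat.card {a : V // P a} = Nat.card (Quotient Γ.compSetoid) := by
    intro P hex huniq
    refine Nat.card_eq_of_bijective
      (fun (a : {a : V // P a}) => (Quotient.mk Γ.compSetoid a.1)) ⟨?_, ?_⟩
    · rintro ⟨a, hPa⟩ ⟨b, hPb⟩ hab
      have hr : Relation.ReflTransGen Γ.UAdj a b := Quotient.exact hab
      exact Subtype.ext (huniq a b hPa hPb hr)
    · intro q
      obtain ⟨a, rfl⟩ := Quotient.exists_rep q
      obtain ⟨b, hPb, hba⟩ := hex a
      exact ⟨⟨b, hPb⟩, Quotient.sound hba⟩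
  exact ⟨main _ hsrc_ex hsrc_uniq, main _ hsink_ex hsink_uniq⟩
end
end

section
/- Let (W,S) be a Coxeter system, Γ a W-digraph with vertex set X, and let the 0-Hecke algebra H_0 act on the ℚ-vector space M_0 with basis X by: a_s·α = β if Γ has an edge (solid or dashed) from α to β labeled s, and a_s·α = −α if the edge of Γ labeled s at α ends at α. Then for ω ∈ X the following are equivalent: (i) ω is a sink of Γ; (ii) a_s·ω = −ω for all s ∈ S; (iii) a_w·ω = (−1)^{ℓ(w)}ω for all w ∈ W. Moreover, if W is finite with longest element w_0, then (i)–(iii) are further equivalent to: (iv) ω = a_{w_0}·α or ω = −a_{w_0}·α for some α ∈ X. -/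
open Finsupp

set_option synthInstance.maxHeartbeats 1000000
set_option maxHeartbeats 1000000

noncomputable section

variable {B W : Type*} [Group W] {M : CoxeterMatrix B}
variable {H : Type*} [Ring H] [Algebra Kq H]

/-- The `0`-Hecke algebra of `(W,S)` over `ℚ`: a `ℚ`-algebra with basis
`{a_w : w ∈ W}` such that `a_1 = 1`, `a_s a_w = a_{sw}` if `ℓ(sw) > ℓ(w)`,
and `a_s a_w = -a_w` if `ℓ(sw) < ℓ(w)`. -/
structure ZeroHeckeAlgebra {B W : Type*} [Group W] {M : CoxeterMatrix B}
    (cs : CoxeterSystem M W) (H0 : Type*) [Ring H0] [Algebra ℚ H0] where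
  a : W → H0
  basis : Module.Basis W ℚ H0
  basis_eq : ∀ w, basis w = a w
  a_one : a 1 = 1
  a_mul_of_lt : ∀ (i : B) (w : W), cs.length w < cs.length (cs.simple i * w) →
    a (cs.simple i) * a w = a (cs.simple i * w)
  a_mul_of_gt : ∀ (i : B) (w : W), cs.length (cs.simple i * w) < cs.length w →
    a (cs.simple i) * a w = - a w

/-- `ρ0` is the representation of the `0`-Hecke algebra on `M₀` (the
`ℚ`-vector space with basis the vertex set of `Γ`) in which
`a_s · α = β` if `Γ` has an edge (solid or dashed) from `α` to `β` labeled
`s`, and `a_s · α = -α` if the edge of `Γ` labeled `s` at `α` ends at `α`. -/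
def ZeroHeckeRep {V H0 : Type*} [Ring H0] [Algebra ℚ H0]
    (cs : CoxeterSystem M W) (hz : ZeroHeckeAlgebra cs H0)
    (Γ : SLabeledDigraph V B)
    (ρ0 : H0 →ₐ[ℚ] Module.End ℚ (V →₀ ℚ)) : Prop :=
  ∀ (α β : V) (i : B) (d : Bool), Γ.Edge α β i d →
    ρ0 (hz.a (cs.simple i)) (single α (1 : ℚ)) = single β (1 : ℚ) ∧
    ρ0 (hz.a (cs.simple i)) (single β (1 : ℚ)) = - single β (1 : ℚ)

/-- Lemma `h0sinks`.  With the `0`-Hecke algebra acting on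
`M₀` as above, for a vertex `ω` the following are equivalent:
(i) `ω` is a sink of `Γ`; (ii) `a_s ω = -ω` for all `s ∈ S`;
(iii) `a_w ω = (-1)^{ℓ(w)} ω` for all `w ∈ W`.  If moreover `W` is finite
with longest element `w₀`, these are equivalent to:
(iv) `ω = ±a_{w₀} α` for some vertex `α`. -/
theorem zero_hecke_sinks {V H0 : Type*} [Ring H0] [Algebra ℚ H0]
    (cs : CoxeterSystem M W) (ha : HeckeAlgebra cs H)
    (Γ : SLabeledDigraph V B) (hwd : IsWDigraph cs ha Γ)
    (hz : ZeroHeckeAlgebra cs H0)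
    (ρ0 : H0 →ₐ[ℚ] Module.End ℚ (V →₀ ℚ)) (hρ0 : ZeroHeckeRep cs hz Γ ρ0)
    (ω : V) :
    (Γ.IsSink ω ↔
      ∀ i : B, ρ0 (hz.a (cs.simple i)) (single ω (1 : ℚ)) = - single ω (1 : ℚ)) ∧
    (Γ.IsSink ω ↔
      ∀ w : W, ρ0 (hz.a w) (single ω (1 : ℚ)) =
        ((-1 : ℚ) ^ cs.length w) • single ω (1 : ℚ)) ∧
    (Finite W → ∀ w₀ : W, (∀ w : W, cs.length w ≤ cs.length w₀) →
      (Γ.IsSink ω ↔ ∃ α : V,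
        ρ0 (hz.a w₀) (single α (1 : ℚ)) = single ω (1 : ℚ) ∨
        ρ0 (hz.a w₀) (single α (1 : ℚ)) = - single ω (1 : ℚ))) := by
  
  classical
  have hii : Γ.IsSink ω ↔
      ∀ i : B, ρ0 (hz.a (cs.simple i)) (single ω (1 : ℚ)) = - single ω (1 : ℚ) := by
    constructor
    · intro hsink i
      obtain ⟨⟨a, b, d⟩, ⟨hinc, hedge⟩, -⟩ := Γ.unique_edge ω i
      simp only at hinc hedge
      rcases hinc with rfl | rfl
      · exact absurd hedge (hsink b i d)
      · exact (hρ0 a b i d hedge).2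
    · intro h b i d hedge
      have h1 := (hρ0 ω b i d hedge).1
      rw [h i] at h1
      have hbω : b ≠ ω := fun he => Γ.no_loop ω i d (he ▸ hedge)
      have h2 := DFunLike.congr_fun h1 b
      simp [Finsupp.single_apply, hbω, Ne.symm hbω] at h2
  have hiii : (∀ i : B, ρ0 (hz.a (cs.simple i)) (single ω (1:ℚ)) = - single ω (1:ℚ)) →
      ∀ w : W, ρ0 (hz.a w) (single ω (1:ℚ)) = ((-1:ℚ) ^ cs.length w) • single ω (1:ℚ) := by
    intro h
    have key : ∀ n (w : W), cs.length w = n →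
        ρ0 (hz.a w) (single ω (1:ℚ)) = ((-1:ℚ) ^ cs.length w) • single ω (1:ℚ) := by
      intro n
      induction n using Nat.strong_induction_on with
      | _ n ih =>
        intro w hw
        rcases eq_or_ne w 1 with rfl | hne
        · simp [hz.a_one, cs.length_one]
        · obtain ⟨i, hi⟩ := cs.exists_leftDescent_of_ne_one hne
          have hlen : cs.length (cs.simple i * w) + 1 = cs.length w :=
            cs.isLeftDescent_iff.mp hi
          set w' := cs.simple i * w with hw'
          have hww : cs.simple i * w' = w := by
            rw [hw', ← mul_assoc, cs.simple_mul_simple_self, one_mul]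
          have hmul : hz.a (cs.simple i) * hz.a w' = hz.a w := by
            have := hz.a_mul_of_lt i w' (by rw [hww]; omega)
            rwa [hww] at this
          have hih := ih (cs.length w') (by omega) w' rfl
          calc ρ0 (hz.a w) (single ω (1:ℚ))
              = ρ0 (hz.a (cs.simple i)) (ρ0 (hz.a w') (single ω (1:ℚ))) := by
                rw [← hmul, map_mul]; rfl
            _ = ((-1:ℚ) ^ cs.length w') • ρ0 (hz.a (cs.simple i)) (single ω (1:ℚ)) := by
                rw [hih, map_smul]
            _ = ((-1:ℚ) ^ cs.length w) • single ω (1:ℚ) := by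
                rw [h i, ← hlen, pow_succ, mul_neg_one, neg_smul, smul_neg]
    exact fun w => key (cs.length w) w rfl
  refine ⟨hii, ?_, ?_⟩
  · constructor
    · exact fun hs => hiii (hii.mp hs)
    · intro h
      apply hii.mpr
      intro i
      have h1 := h (cs.simple i)
      rwa [cs.length_simple, pow_one, neg_smul, one_smul] at h1
  · intro _ w₀ hmax
    constructor
    · intro hs
      refine ⟨ω, ?_⟩
      have h3 := hiii (hii.mp hs) w₀
      rcases Nat.even_or_odd (cs.length w₀) with he | ho
      · left; rw [h3, he.neg_one_pow, one_smul]
      · right; rw [h3, ho.neg_one_pow, neg_smul, one_smul]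
    · rintro ⟨α, hα⟩
      apply hii.mpr
      intro i
      have hlt : cs.length (cs.simple i * w₀) < cs.length w₀ := by
        rcases cs.length_simple_mul w₀ i with h1 | h2
        · have := hmax (cs.simple i * w₀); omega
        · omega
      have hmul := hz.a_mul_of_gt i w₀ hlt
      have hkey : ρ0 (hz.a (cs.simple i)) (ρ0 (hz.a w₀) (single α (1:ℚ)))
          = - ρ0 (hz.a w₀) (single α (1:ℚ)) := by
        have h4 : ρ0 (hz.a (cs.simple i) * hz.a w₀) (single α (1:ℚ))
            = ρ0 (- hz.a w₀) (single α (1:ℚ)) := by rw [hmul]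
        simpa [map_mul, Module.End.mul_apply, map_neg] using h4
      rcases hα with hh | hh <;> rw [hh] at hkey
      · exact hkey
      · rw [map_neg, neg_neg] at hkey
        exact neg_eq_iff_eq_neg.mp hkey
end
end
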